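/- Let Π be a ground head-cycle-free disjunctive logic program and let S ⊆ Lit(Π) be a consistent set of literals. Then S is an answer set of Π if and only if: (1) S satisfies every rule of Π, and (2) there exists a function φ : Lit(Π) → ℕ such that for every literal l ∈ S there is a rule r ∈ Π with (a) pbody(r) ⊆ S, (b) nbody(r) ∩ S = ∅, (c) l ∈ head(r), (d) S ∩ (head(r) \ {l}) = ∅, and (e) φ(l') < φ(l) for every l' ∈ pbody(r). -/

import Mathlib

open scoped Classical

namespace ASP

universe u v

/-- A ground literal: an atom together with a sign
(`true` for the atom itself, `false` for its strong negation `¬a`).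
The atom `|l|` of a literal `l` is its first component `l.1`. -/
abbrev Lit (α : Type u) : Type u := α × Bool

/-- A ground disjunctive rule, consisting of three finite sets of literals:
head, positive body and negative body. -/
structure Rule (α : Type u) : Type u where
  head : Finset (Lit α)
  pbody : Finset (Lit α)
  nbody : Finset (Lit α)
deriving DecidableEq

variable {α : Type u}

/-- A set of literals is consistent if it contains no atom together with
its strong negation. -/
def Consistent (S : Set (Lit α)) : Prop :=
  ∀ a : α, ¬((a, true) ∈ S ∧ (a, false) ∈ S)

/-- `S` satisfies a rule `r`: the head intersects `S` whenever
`pbody(r) ⊆ S` and `nbody(r) ∩ S = ∅`. -/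
def SatRule (S : Set (Lit α)) (r : Rule α) : Prop :=
  ((∀ l ∈ r.pbody, l ∈ S) ∧ (∀ l ∈ r.nbody, l ∉ S)) → ∃ l ∈ r.head, l ∈ S

/-- Answer sets of a positive program: `⊆`-minimal consistent sets of
literals satisfying all rules. -/
def IsAnswerSetPos (P : Set (Rule α)) (S : Set (Lit α)) : Prop :=
  Consistent S ∧ (∀ r ∈ P, SatRule S r) ∧
    ∀ T : Set (Lit α), Consistent T → (∀ r ∈ P, SatRule T r) → T ⊆ S → T = S

/-- The reduct `P^S` of a program w.r.t. a set of literals `S`. -/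
def reduct (P : Set (Rule α)) (S : Set (Lit α)) : Set (Rule α) :=
  {x | ∃ r ∈ P, (∀ l ∈ r.nbody, l ∉ S) ∧ x = ⟨r.head, r.pbody, ∅⟩}

/-- `S` is an answer set of `P` iff `S` is an answer set of the positive
program `P^S`. -/
def IsAnswerSet (P : Set (Rule α)) (S : Set (Lit α)) : Prop :=
  IsAnswerSetPos (reduct P S) S

/-- `Lit(P)`: the literals occurring in a program. -/
def litsOf (P : Set (Rule α)) : Set (Lit α) :=
  {l | ∃ r ∈ P, l ∈ r.head ∨ l ∈ r.pbody ∨ l ∈ r.nbody}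

/-- Edges of the positive dependency graph: from each head literal of a
rule to each of its positive body literals. -/
def DepEdge (P : Set (Rule α)) (l l' : Lit α) : Prop :=
  ∃ r ∈ P, l ∈ r.head ∧ l' ∈ r.pbody

/-- Head-cycle freeness: no two distinct literals occurring together in
some rule head lie on a common cycle of the positive dependency graph. -/
def HeadCycleFree (P : Set (Rule α)) : Prop :=
  ∀ r ∈ P, ∀ l ∈ r.head, ∀ l' ∈ r.head, l ≠ l' →
    ¬(Relation.ReflTransGen (DepEdge P) l l' ∧ Relation.ReflTransGen (DepEdge P) l' l)

/-- `P ∪ S`: the program `P` extended with the literals of `S` as facts. -/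
def withFacts (P : Set (Rule α)) (S : Set (Lit α)) : Set (Rule α) :=
  P ∪ {x | ∃ l ∈ S, x = ⟨{l}, ∅, ∅⟩}


lemma consistent_mono {S T : Set (Lit α)} (h : Consistent S) (hTS : T ⊆ S) :
    Consistent T := fun a ha => h a ⟨hTS ha.1, hTS ha.2⟩

/-- `l` is supported w.r.t. `S` by a rule whose positive body lies in `D`. -/
def Supp (P : Set (Rule α)) (S D : Set (Lit α)) (l : Lit α) : Prop :=
  ∃ r ∈ P, (∀ l' ∈ r.pbody, l' ∈ D) ∧ (∀ l' ∈ r.nbody, l' ∉ S) ∧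
    l ∈ r.head ∧ (∀ l' ∈ r.head, l' ≠ l → l' ∉ S)

/-- Iterated derivation stages. -/
def stage (P : Set (Rule α)) (S : Set (Lit α)) : ℕ → Set (Lit α)
  | 0 => ∅
  | n + 1 => stage P S n ∪ {l | l ∈ S ∧ Supp P S (stage P S n) l}

lemma stage_mono (P : Set (Rule α)) (S : Set (Lit α)) {n m : ℕ} (h : n ≤ m) :
    stage P S n ⊆ stage P S m := by
  induction h with
  | refl => exact subset_rfl
  | step _ ih => exact fun x hx => Or.inl (ih hx)

lemma stage_subset (P : Set (Rule α)) (S : Set (Lit α)) : ∀ n, stage P S n ⊆ S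
  | 0 => by intro x hx; exact absurd hx (Set.notMem_empty x)
  | n + 1 => by
      intro x hx
      rcases hx with hx | hx
      · exact stage_subset P S n hx
      · exact hx.1

/-- The stage (rank) at which a literal is derived. -/
noncomputable def rank (P : Set (Rule α)) (S : Set (Lit α)) (l : Lit α) : ℕ :=
  if h : ∃ n, l ∈ stage P S n then Nat.find h else 0

lemma rank_le {P : Set (Rule α)} {S : Set (Lit α)} {l : Lit α} {n : ℕ}
    (h : l ∈ stage P S n) : rank P S l ≤ n := by
  rw [rank, dif_pos ⟨n, h⟩]; exact Nat.find_min' _ h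

lemma mem_stage_rank {P : Set (Rule α)} {S : Set (Lit α)} {l : Lit α}
    (h : ∃ n, l ∈ stage P S n) : l ∈ stage P S (rank P S l) := by
  rw [rank, dif_pos h]; exact Nat.find_spec h

lemma litsOf_finite {P : Set (Rule α)} (hfin : P.Finite) : (litsOf P).Finite := by
  have hsub : litsOf P ⊆ ⋃ r ∈ P, ((r.head : Set (Lit α)) ∪ r.pbody ∪ r.nbody) := by
    rintro l ⟨r, hr, h⟩
    refine Set.mem_biUnion hr ?_
    rcases h with h | h | h
    · exact Or.inl (Or.inl h)
    · exact Or.inl (Or.inr h)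
    · exact Or.inr h
  exact (hfin.biUnion fun r _ =>
    ((r.head.finite_toSet.union r.pbody.finite_toSet).union r.nbody.finite_toSet)).subset hsub


/-- Ben-Eliyahu–Dechter characterization of the answer sets of a ground
head-cycle-free disjunctive logic program. -/
theorem statement0 {α : Type u} (P : Set (Rule α)) (hfin : P.Finite)
    (hhcf : HeadCycleFree P) (S : Set (Lit α)) (hsub : S ⊆ litsOf P)
    (hcons : Consistent S) :
    IsAnswerSet P S ↔
      ((∀ r ∈ P, SatRule S r) ∧
        ∃ φ : Lit α → ℕ, ∀ l ∈ S, ∃ r ∈ P,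
          (∀ l' ∈ r.pbody, l' ∈ S) ∧
          (∀ l' ∈ r.nbody, l' ∉ S) ∧
          l ∈ r.head ∧
          (∀ l' ∈ r.head, l' ≠ l → l' ∉ S) ∧
          (∀ l' ∈ r.pbody, φ l' < φ l)) := by
  constructor
  · rintro ⟨hconsS, hsatR, hmin⟩
    have hsatP : ∀ r ∈ P, SatRule S r := by
      intro r hr hb
      exact hsatR ⟨r.head, r.pbody, ∅⟩ ⟨r, hr, hb.2, rfl⟩
        ⟨hb.1, fun x hx => absurd hx (Finset.notMem_empty x)⟩
    have hSfin : S.Finite := (litsOf_finite hfin).subset hsub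
    set D : Set (Lit α) := ⋃ n, stage P S n with hD
    have hstageD : ∀ n, stage P S n ⊆ D := fun n => Set.subset_iUnion _ n
    have hDS : D ⊆ S := Set.iUnion_subset fun n => stage_subset P S n
    have hfix : ∀ l ∈ S, Supp P S D l → l ∈ D := by
      rintro l hl ⟨r, hr, hpb, hnb, hhd, hsole⟩
      set N := r.pbody.sup (rank P S) with hN
      have hpbN : ∀ l' ∈ r.pbody, l' ∈ stage P S N := by
        intro l' hl'
        have hex : ∃ n, l' ∈ stage P S n := Set.mem_iUnion.mp (hpb l' hl')
        exact stage_mono P S (Finset.le_sup hl') (mem_stage_rank hex)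
      exact hstageD (N + 1) (Or.inr ⟨hl, r, hr, hpbN, hnb, hhd, hsole⟩)
    have hfail : ∀ T : Set (Lit α), T ⊆ S → T ≠ S →
        ∃ r ∈ P, (∀ l ∈ r.nbody, l ∉ S) ∧ (∀ l ∈ r.pbody, l ∈ T) ∧
          (∀ l ∈ r.head, l ∉ T) := by
      intro T hTS hTne
      by_contra hno
      push_neg at hno
      apply hTne
      refine hmin T (consistent_mono hcons hTS) ?_ hTS
      rintro x ⟨r, hr, hnb, rfl⟩
      rintro ⟨hpb, -⟩
      exact hno r hr hnb hpb
    have hstep : ∀ l, l ∈ S → l ∉ D → ∃ r ∈ P,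
        (∀ l' ∈ r.nbody, l' ∉ S) ∧ (∀ l' ∈ r.pbody, l' ∈ S) ∧ l ∈ r.head ∧
        (∀ l' ∈ r.head, l' ≠ l → l' ∉ S) ∧ ∃ m ∈ r.pbody, m ∈ S ∧ m ∉ D := by
      intro l hlS hlD
      obtain ⟨r, hr, hnb, hpb, hhd⟩ := hfail (S \ {l}) Set.diff_subset (by
        intro hEq
        have : l ∈ S \ {l} := hEq.symm ▸ hlS
        exact this.2 rfl)
      have hpbS : ∀ l' ∈ r.pbody, l' ∈ S := fun l' h => (hpb l' h).1
      obtain ⟨h0, hh0, hh0S⟩ := hsatP r hr ⟨hpbS, hnb⟩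
      have h0l : h0 = l := by
        by_contra hne
        exact hhd h0 hh0 ⟨hh0S, fun hm => hne (by simpa using hm)⟩
      subst h0l
      have hsole : ∀ l' ∈ r.head, l' ≠ h0 → l' ∉ S := by
        intro l' h1 h2 h3
        exact hhd l' h1 ⟨h3, fun hm => h2 (by simpa using hm)⟩
      refine ⟨r, hr, hnb, hpbS, hh0, hsole, ?_⟩
      by_contra hnom
      push_neg at hnom
      have hall : ∀ m ∈ r.pbody, m ∈ D := fun m hm => hnom m hm (hpbS m hm)
      exact hlD (hfix h0 hlS ⟨r, hr, hall, hnb, hh0, hsole⟩)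
    have hSD : S ⊆ D := by
      by_contra hnot
      rw [Set.not_subset] at hnot
      obtain ⟨l0, hl0S, hl0D⟩ := hnot
      have hUfin : {l : Lit α | l ∈ S ∧ l ∉ D}.Finite := hSfin.subset fun x hx => hx.1
      set Uf : Finset (Lit α) := hUfin.toFinset with hUfdef
      have hUfmemIff : ∀ {x : Lit α}, x ∈ Uf ↔ (x ∈ S ∧ x ∉ D) := by
        intro x; rw [hUfdef, Set.Finite.mem_toFinset]; exact Iff.rfl
      set Step : Lit α → Lit α → Prop := fun l m => ∃ r ∈ P,
        (∀ l' ∈ r.nbody, l' ∉ S) ∧ (∀ l' ∈ r.pbody, l' ∈ S) ∧ l ∈ r.head ∧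
        (∀ l' ∈ r.head, l' ≠ l → l' ∉ S) ∧ m ∈ r.pbody ∧ m ∈ S ∧ m ∉ D with hStepDef
      have hStepDep : ∀ {l m : Lit α}, Step l m → DepEdge P l m := by
        rintro l m ⟨r, hr, -, -, hhd, -, hm, -⟩; exact ⟨r, hr, hhd, hm⟩
      have hStepU : ∀ {l m : Lit α}, Step l m → m ∈ Uf := by
        rintro l m ⟨r, -, -, -, -, -, -, hmS, hmD⟩
        exact hUfmemIff.mpr ⟨hmS, hmD⟩
      set fam : Finset (Finset (Lit α)) := Uf.powerset.filter
        (fun C => C.Nonempty ∧ ∀ l ∈ C, ∀ m, Step l m → m ∈ C) with hfamdef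
      have hUfmem : Uf ∈ fam := by
        rw [hfamdef, Finset.mem_filter, Finset.mem_powerset]
        exact ⟨subset_rfl, ⟨l0, hUfmemIff.mpr ⟨hl0S, hl0D⟩⟩,
          fun l _ m hm => hStepU hm⟩
      obtain ⟨C, hCmem, hCmin⟩ := fam.exists_minimal ⟨Uf, hUfmem⟩
      rw [hfamdef, Finset.mem_filter, Finset.mem_powerset] at hCmem
      obtain ⟨hCU, hCne, hCcl⟩ := hCmem
      have hconn : ∀ c ∈ C, ∀ c' ∈ C, Relation.ReflTransGen Step c c' := by
        intro c hc c' hc'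
        set R : Finset (Lit α) := C.filter
          (fun m => Relation.ReflTransGen Step c m) with hRdef
        have hRfam : R ∈ fam := by
          rw [hfamdef, Finset.mem_filter, Finset.mem_powerset]
          refine ⟨(Finset.filter_subset _ _).trans hCU, ⟨c, ?_⟩, ?_⟩
          · rw [hRdef, Finset.mem_filter]; exact ⟨hc, Relation.ReflTransGen.refl⟩
          · intro l hl m hm
            rw [hRdef, Finset.mem_filter] at hl ⊢
            exact ⟨hCcl l hl.1 m hm, hl.2.tail hm⟩
        have hRC : R ⊆ C := Finset.filter_subset _ _
        have hRCeq : R = C := by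
          by_contra hne
          exact hne (le_antisymm hRC (hCmin hRfam hRC))
        rw [← hRCeq, hRdef, Finset.mem_filter] at hc'
        exact hc'.2
      obtain ⟨c1, hc1⟩ := hCne
      have hCS : ∀ c ∈ C, c ∈ S := fun c hc => (hUfmemIff.mp (hCU hc)).1
      have hCD : ∀ c ∈ C, c ∉ D := fun c hc => (hUfmemIff.mp (hCU hc)).2
      obtain ⟨r, hr, hnb, hpb, hhd⟩ := hfail (S \ ↑C) Set.diff_subset (by
        intro hEq
        have : c1 ∈ S \ ↑C := hEq.symm ▸ (hCS c1 hc1)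
        exact this.2 (by exact_mod_cast hc1))
      have hpbS : ∀ l' ∈ r.pbody, l' ∈ S := fun l' h => (hpb l' h).1
      obtain ⟨h0, hh0, hh0S⟩ := hsatP r hr ⟨hpbS, hnb⟩
      have hh0C : h0 ∈ C := by
        by_contra hx
        exact hhd h0 hh0 ⟨hh0S, fun hm => hx (by exact_mod_cast hm)⟩
      by_cases hsole : ∀ l' ∈ r.head, l' ≠ h0 → l' ∉ S
      · by_cases hall : ∀ m ∈ r.pbody, m ∈ D
        · exact hCD h0 hh0C (hfix h0 (hCS h0 hh0C) ⟨r, hr, hall, hnb, hh0, hsole⟩)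
        · push_neg at hall
          obtain ⟨m, hm, hmD⟩ := hall
          have hst : Step h0 m := ⟨r, hr, hnb, hpbS, hh0, hsole, hm, hpbS m hm, hmD⟩
          have hmC : m ∈ C := hCcl h0 hh0C m hst
          exact (hpb m hm).2 (by exact_mod_cast hmC)
      · push_neg at hsole
        obtain ⟨h1, hh1, hne, hh1S⟩ := hsole
        have hh1C : h1 ∈ C := by
          by_contra hx
          exact hhd h1 hh1 ⟨hh1S, fun hm => hx (by exact_mod_cast hm)⟩
        refine hhcf r hr h1 hh1 h0 hh0 hne ⟨?_, ?_⟩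
        · exact Relation.ReflTransGen.mono (fun a b h => hStepDep h) _ _ (hconn h1 hh1C h0 hh0C)
        · exact Relation.ReflTransGen.mono (fun a b h => hStepDep h) _ _ (hconn h0 hh0C h1 hh1C)
    refine ⟨hsatP, rank P S, ?_⟩
    intro l hlS
    have hex : ∃ n, l ∈ stage P S n := Set.mem_iUnion.mp (hSD hlS)
    have hstage := mem_stage_rank hex
    cases hn : rank P S l with
    | zero =>
      rw [hn] at hstage
      exact absurd hstage (Set.notMem_empty l)
    | succ n =>
      rw [hn] at hstage
      rcases hstage with h | h
      · have := rank_le h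
        omega
      · obtain ⟨-, r, hr, hpb, hnb, hhd, hsole⟩ := h
        refine ⟨r, hr, fun l' hl' => stage_subset P S n (hpb l' hl'), hnb, hhd, hsole, ?_⟩
        intro l' hl'
        have := rank_le (hpb l' hl')
        omega
  · rintro ⟨hsat, φ, hφ⟩
    refine ⟨hcons, ?_, ?_⟩
    · rintro x ⟨r, hr, hnb, rfl⟩ ⟨hpb, -⟩
      exact hsat r hr ⟨hpb, hnb⟩
    · intro T hTcons hTsat hTS
      apply Set.Subset.antisymm hTS
      have key : ∀ n : ℕ, ∀ l, l ∈ S → φ l < n → l ∈ T := by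
        intro n
        induction n with
        | zero => exact fun l _ h => absurd h (Nat.not_lt_zero _)
        | succ n ih =>
          intro l hlS hlt
          obtain ⟨r, hr, hpb, hnb, hhd, hsole, hdec⟩ := hφ l hlS
          have hpbT : ∀ l' ∈ r.pbody, l' ∈ T := by
            intro l' hl'
            exact ih l' (hpb l' hl') (by have := hdec l' hl'; omega)
          obtain ⟨h0, hh0, hh0T⟩ := hTsat ⟨r.head, r.pbody, ∅⟩ ⟨r, hr, hnb, rfl⟩
            ⟨hpbT, fun x hx => absurd hx (Finset.notMem_empty x)⟩
          have h0l : h0 = l := by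
            by_contra hne
            exact hsole h0 hh0 hne (hTS hh0T)
          exact h0l ▸ hh0T
      exact fun l hlS => key (φ l + 1) l hlS (Nat.lt_succ_self _)


end ASP
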